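/- arXiv:2002.02565 — 7 statements merged into one kernel-verified Lean document; each statement's English description precedes it below -/
import Mathlib

section
/- For any group G, the set LO(G) of positive cones of G, viewed as a subset of the product space 2^G (with the product topology where 2 is discrete), is a closed subset of 2^G. In particular LO(G) is compact. -/
/-- The set of (characteristic functions of) positive cones of `G`,
viewed inside the product space `2^G = G → Bool`. -/
def LOset (G : Type*) [Group G] : Set (G → Bool) :=
  {χ | (∀ a b : G, χ a = true → χ b = true → χ (a * b) = true) ∧
       (∀ g : G, χ g = true ∨ χ g⁻¹ = true ∨ g = 1) ∧
       (∀ g : G, χ g = true → χ g⁻¹ ≠ true) ∧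
       χ (1 : G) ≠ true}

lemma eval_closed {G : Type*} (g : G) (b : Bool) :
    IsClosed {χ : G → Bool | χ g = b} := by
  have : {χ : G → Bool | χ g = b} = (fun χ : G → Bool => χ g) ⁻¹' {b} := rfl
  rw [this]
  exact IsClosed.preimage (continuous_apply g) (isClosed_discrete {b})

theorem stmt_3 (G : Type*) [Group G] :
    IsClosed (LOset G) ∧ IsCompact (LOset G) := by
  have hC1 : ∀ a b : G,
      IsClosed {χ : G → Bool | χ a = true → χ b = true → χ (a * b) = true} := by
    intro a b
    have : {χ : G → Bool | χ a = true → χ b = true → χ (a * b) = true} =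
        {χ : G → Bool | χ a = false} ∪ {χ | χ b = false} ∪ {χ | χ (a * b) = true} := by
      ext χ
      simp only [Set.mem_setOf_eq, Set.mem_union]
      rcases Bool.eq_false_or_eq_true (χ a) with h | h <;>
        rcases Bool.eq_false_or_eq_true (χ b) with h' | h' <;> simp [h, h']
    rw [this]
    exact ((eval_closed a false).union (eval_closed b false)).union (eval_closed (a * b) true)
  have hC2 : ∀ g : G,
      IsClosed {χ : G → Bool | χ g = true ∨ χ g⁻¹ = true ∨ g = 1} := by
    intro g
    by_cases hg : g = 1
    · have : {χ : G → Bool | χ g = true ∨ χ g⁻¹ = true ∨ g = 1} = Set.univ := by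
        ext χ; simp [hg]
      rw [this]; exact isClosed_univ
    · have : {χ : G → Bool | χ g = true ∨ χ g⁻¹ = true ∨ g = 1} =
          {χ : G → Bool | χ g = true} ∪ {χ | χ g⁻¹ = true} := by
        ext χ; simp [hg]
      rw [this]
      exact (eval_closed g true).union (eval_closed g⁻¹ true)
  have hC3 : ∀ g : G,
      IsClosed {χ : G → Bool | χ g = true → χ g⁻¹ ≠ true} := by
    intro g
    have : {χ : G → Bool | χ g = true → χ g⁻¹ ≠ true} =
        {χ : G → Bool | χ g = false} ∪ {χ | χ g⁻¹ = false} := by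
      ext χ
      simp only [Set.mem_setOf_eq, Set.mem_union]
      rcases Bool.eq_false_or_eq_true (χ g) with h | h <;> simp [h]
    rw [this]
    exact (eval_closed g false).union (eval_closed g⁻¹ false)
  have hC4 : IsClosed {χ : G → Bool | χ (1 : G) ≠ true} := by
    have : {χ : G → Bool | χ (1 : G) ≠ true} = {χ : G → Bool | χ (1 : G) = false} := by
      ext χ; simp
    rw [this]; exact eval_closed (1 : G) false
  have hclosed : IsClosed (LOset G) := by
    have : LOset G =
        (⋂ a : G, ⋂ b : G, {χ : G → Bool | χ a = true → χ b = true → χ (a * b) = true}) ∩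
        ((⋂ g : G, {χ : G → Bool | χ g = true ∨ χ g⁻¹ = true ∨ g = 1}) ∩
        ((⋂ g : G, {χ : G → Bool | χ g = true → χ g⁻¹ ≠ true}) ∩
        {χ : G → Bool | χ (1 : G) ≠ true})) := by
      ext χ
      simp [LOset, Set.mem_iInter, and_assoc]
    rw [this]
    exact (isClosed_iInter fun a => isClosed_iInter fun b => hC1 a b).inter
      ((isClosed_iInter hC2).inter ((isClosed_iInter hC3).inter hC4))
  exact ⟨hclosed, hclosed.isCompact⟩
end

section
/- Let G be a group, P a positive cone of G, and suppose the orbit of P under the conjugation action of G on LO(G) is finite. Then the left-ordering associated to P is Conradian: for every pair g, h ∈ P there exists n ∈ ℕ such that g⁻¹hgⁿ ∈ P (i.e., g < hgⁿ in the order given by P). -/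
/-- A positive cone on a group `G`. -/
def IsCone {G : Type*} [Group G] (P : Set G) : Prop :=
  (∀ a ∈ P, ∀ b ∈ P, a * b ∈ P) ∧
  (∀ g : G, g ∈ P ∨ g⁻¹ ∈ P ∨ g = 1) ∧
  (∀ g ∈ P, g⁻¹ ∉ P) ∧
  (1 : G) ∉ P

/-- If the orbit of `P` under the conjugation action of `G` on `LO(G)` is
finite, then the associated left-ordering is Conradian. -/
theorem stmt_6 {G : Type*} [Group G] (P : Set G) (hP : IsCone P)
    (hfin : {Q : Set G | ∃ g : G, Q = (fun p => g * p * g⁻¹) '' P}.Finite) :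
    ∀ g ∈ P, ∀ h ∈ P, ∃ n : ℕ, g⁻¹ * (h * g ^ n) ∈ P := by
  intro g hg h hh
  have hpow : ∀ k : ℕ, g ^ k ∈ P ∨ g ^ k = 1 := by
    intro k
    induction k with
    | zero => right; simp
    | succ k ih =>
      rw [pow_succ]
      rcases ih with h1 | h1
      · left; exact hP.1 _ h1 _ hg
      · left; rw [h1, one_mul]; exact hg
  set f : ℕ → Set G := fun n => (fun p => (g⁻¹) ^ n * p * ((g⁻¹) ^ n)⁻¹) '' P with hf
  have hmem : ∀ n, f n ∈ {Q : Set G | ∃ a : G, Q = (fun p => a * p * a⁻¹) '' P} :=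
    fun n => ⟨(g⁻¹) ^ n, rfl⟩
  have hninj : ¬ Function.Injective f := by
    intro hinj
    exact (hfin.subset (Set.range_subset_iff.mpr hmem)).not_infinite
      (Set.infinite_range_of_injective hinj)
  rw [Function.not_injective_iff] at hninj
  obtain ⟨m, n, hfeq, hmn⟩ := hninj
  have key : ∀ m n : ℕ, m < n → f m = f n → ∀ x ∈ P, (g⁻¹) ^ (n - m) * x * g ^ (n - m) ∈ P := by
    intro m n hlt hfeq x hx
    obtain ⟨k, hk⟩ : ∃ k, n = m + k := ⟨n - m, by omega⟩
    have hnm : n - m = k := by omega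
    subst hk
    rw [hnm]
    have hximg : (g⁻¹) ^ (m + k) * x * ((g⁻¹) ^ (m + k))⁻¹ ∈ f m := by
      rw [hfeq]; exact ⟨x, hx, rfl⟩
    obtain ⟨p, hp, heq⟩ := hximg
    have hpeq : p = (g⁻¹) ^ k * x * g ^ k := by
      have h2 : (g⁻¹) ^ (m + k) = (g⁻¹) ^ m * (g⁻¹) ^ k := pow_add _ _ _
      rw [h2] at heq
      have := congrArg (fun y => ((g⁻¹) ^ m)⁻¹ * y * (g⁻¹) ^ m) heq
      simp only [mul_assoc, inv_mul_cancel_left, mul_inv_cancel, mul_one,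
        mul_inv_cancel_left, inv_mul_cancel] at this
      rw [this]
      group
    rwa [← hpeq]
  have hkey : ∃ k : ℕ, 1 ≤ k ∧ ∀ x ∈ P, (g⁻¹) ^ k * x * g ^ k ∈ P := by
    rcases lt_or_gt_of_ne hmn with hlt | hlt
    · exact ⟨n - m, by omega, key m n hlt hfeq⟩
    · exact ⟨m - n, by omega, key n m hlt hfeq.symm⟩
  obtain ⟨k, hk1, hkP⟩ := hkey
  obtain ⟨j, rfl⟩ : ∃ j, k = j + 1 := ⟨k - 1, by omega⟩
  have hs : (g⁻¹) ^ (j + 1) * h * g ^ (j + 1) ∈ P := hkP h hh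
  have hgk : g ^ (j + 1) ∈ P := by
    rcases hpow (j + 1) with h1 | h1
    · exact h1
    · exfalso
      have : g ^ (j + 1) = g ^ j * g := pow_succ _ _
      rcases hpow j with h2 | h2
      · have := hP.1 _ h2 _ hg
        rw [← pow_succ] at this
        rw [h1] at this
        exact hP.2.2.2 this
      · rw [this, h2, one_mul] at h1
        rw [h1] at hg
        exact hP.2.2.2 hg
  refine ⟨(j + 1) + (j + 1), ?_⟩
  have hrw : g⁻¹ * (h * g ^ ((j + 1) + (j + 1))) =
      g ^ j * ((g⁻¹) ^ (j + 1) * h * g ^ (j + 1)) * g ^ (j + 1) := by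
    rw [pow_add]
    group
  rw [hrw]
  rcases hpow j with h1 | h1
  · exact hP.1 _ (hP.1 _ h1 _ hs) _ hgk
  · rw [h1, one_mul]
    exact hP.1 _ hs _ hgk
end

section
/- Let G be a countable group acting by homeomorphisms on a compact Polish space X such that every orbit is dense and some orbit is nonmeager. Then X consists of a single finite orbit. -/
/-- If a countable group acts by homeomorphisms on a compact Polish space with
every orbit dense and some orbit nonmeager, then the space is a single finite
orbit. -/
theorem stmt_9 {G X : Type*} [Group G] [Countable G]
    [TopologicalSpace X] [CompactSpace X] [PolishSpace X]
    [MulAction G X] (hcont : ∀ g : G, Continuous (fun x : X => g • x))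
    (hdense : ∀ x : X, Dense (MulAction.orbit G x))
    (hnonmeager : ∃ x : X, ¬ IsMeagre (MulAction.orbit G x)) :
    ∃ x : X, MulAction.orbit G x = Set.univ ∧ (MulAction.orbit G x).Finite := by
  haveI : T2Space X := inferInstance
  obtain ⟨x, hx⟩ := hnonmeager
  -- find an isolated point y in the orbit of x
  have horbc : (MulAction.orbit G x).Countable := Set.countable_range _
  have : ∃ y : X, IsOpen ({y} : Set X) := by
    by_contra h
    push_neg at h
    apply hx
    rw [isMeagre_iff_countable_union_isNowhereDense]
    refine ⟨(fun y => ({y} : Set X)) '' MulAction.orbit G x, ?_, horbc.image _, ?_⟩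
    · rintro t ⟨y, -, rfl⟩
      show interior (closure ({y} : Set X)) = ∅
      rw [closure_singleton]
      rw [Set.eq_empty_iff_forall_notMem]
      intro z hz
      have hzy : z = y := Set.mem_singleton_iff.mp (interior_subset hz)
      rw [hzy] at hz
      exact h y (by
        have : interior ({y} : Set X) = {y} :=
          Set.Subset.antisymm interior_subset (Set.singleton_subset_iff.2 hz)
        rw [← this]; exact isOpen_interior)
    · intro z hz
      exact Set.mem_sUnion.2 ⟨{z}, ⟨z, hz, rfl⟩, rfl⟩
  obtain ⟨y, hy⟩ := this
  -- every orbit, being dense, must meet the open set {y}, so orbit y = univ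
  have horb : MulAction.orbit G y = Set.univ := by
    ext z
    simp only [Set.mem_univ, iff_true]
    obtain ⟨w, ⟨g, hg⟩, hw1⟩ := (hdense z).exists_mem_open hy ⟨y, rfl⟩
    have h2 : w = y := hw1
    have h1 : g • z = y := by rw [← h2]; exact hg
    exact ⟨g⁻¹, show g⁻¹ • y = z by rw [← h1, inv_smul_smul]⟩
  -- every singleton is open: z = g • y and (g⁻¹ • ·) ⁻¹' {y} = {g • y}
  have hsing : ∀ z : X, IsOpen ({z} : Set X) := by
    intro z
    have hz : z ∈ MulAction.orbit G y := horb ▸ Set.mem_univ z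
    obtain ⟨g, rfl⟩ := hz
    have : ({g • y} : Set X) = (fun w : X => g⁻¹ • w) ⁻¹' {y} := by
      ext w
      constructor
      · rintro rfl; simp
      · intro hw
        have : g⁻¹ • w = y := hw
        rw [← this, smul_inv_smul]; rfl
    rw [this]
    exact (hy.preimage (hcont g⁻¹))
  haveI : DiscreteTopology X := discreteTopology_iff_isOpen_singleton.mpr hsing
  haveI : Finite X := finite_of_compact_of_discrete
  exact ⟨y, horb, Set.toFinite _⟩
end

section
/- Let C be a subgroup of a group G, let R be a positive cone of G, and suppose R = P ∪ Q where P = R ∩ C is a positive cone of C and Q = R \ C. Then Q satisfies: Q·Q ⊆ Q, C·Q·C ⊆ Q, and G = Q ∪ Q⁻¹ ∪ C, provided C is convex relative to the left-order determined by R. -/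
/-- A positive cone of a subgroup `C` of `G`, as a subset of `G`. -/
def IsConeOn {G : Type*} [Group G] (C : Subgroup G) (P : Set G) : Prop :=
  P ⊆ (C : Set G) ∧
  (∀ a ∈ P, ∀ b ∈ P, a * b ∈ P) ∧
  (∀ g ∈ C, g ∈ P ∨ g⁻¹ ∈ P ∨ g = 1) ∧
  (∀ g ∈ P, g⁻¹ ∉ P) ∧
  (1 : G) ∉ P

theorem stmt_12 {G : Type*} [Group G] (C : Subgroup G) (R : Set G)
    (hR : IsCone R)
    (hP : IsConeOn C (R ∩ (C : Set G)))
    (hconv : ∀ g ∈ C, ∀ h ∈ C, ∀ f : G, g⁻¹ * f ∈ R → f⁻¹ * h ∈ R → f ∈ C) :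
    (∀ a ∈ R \ (C : Set G), ∀ b ∈ R \ (C : Set G), a * b ∈ R \ (C : Set G)) ∧
    (∀ c ∈ C, ∀ q ∈ R \ (C : Set G), ∀ c' ∈ C, c * q * c' ∈ R \ (C : Set G)) ∧
    (∀ g : G, g ∈ R \ (C : Set G) ∨ g⁻¹ ∈ R \ (C : Set G) ∨ g ∈ C) := by
  obtain ⟨hmul, htri, hasym, hone⟩ := hR
  -- C * Q ⊆ Q
  have hCQ : ∀ c ∈ C, ∀ q ∈ R \ (C : Set G), c * q ∈ R \ (C : Set G) := by
    intro c hc q hq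
    obtain ⟨hqR, hqC⟩ := hq
    have hnotC : c * q ∉ (C : Set G) := by
      intro h
      exact hqC (by simpa using C.mul_mem (C.inv_mem hc) h)
    refine ⟨?_, hnotC⟩
    rcases htri (c * q) with h | h | h
    · exact h
    · exact absurd (hconv 1 C.one_mem c⁻¹ (C.inv_mem hc) q (by simpa using hqR)
        (by simpa [mul_inv_rev] using h)) hqC
    · exact absurd (show q ∈ C from eq_inv_of_mul_eq_one_right h ▸ C.inv_mem hc) hqC
  -- trichotomy
  have htri' : ∀ g : G, g ∈ R \ (C : Set G) ∨ g⁻¹ ∈ R \ (C : Set G) ∨ g ∈ C := by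
    intro g
    rcases htri g with h | h | h
    · by_cases hg : g ∈ C
      · exact Or.inr (Or.inr hg)
      · exact Or.inl ⟨h, hg⟩
    · by_cases hg : g ∈ C
      · exact Or.inr (Or.inr hg)
      · exact Or.inr (Or.inl ⟨h, fun hmem => hg (by simpa using C.inv_mem hmem)⟩)
    · exact Or.inr (Or.inr (h ▸ C.one_mem))
  -- Q * C ⊆ Q
  have hQC : ∀ q ∈ R \ (C : Set G), ∀ c ∈ C, q * c ∈ R \ (C : Set G) := by
    intro q hq c hc
    rcases htri' (q * c) with h | h | h
    · exact h
    · exfalso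
      have h2 := hCQ c hc _ h
      have : q⁻¹ ∈ R := by simpa [mul_inv_rev] using h2.1
      exact hasym q hq.1 this
    · exact absurd (by simpa using C.mul_mem h (C.inv_mem hc)) hq.2
  refine ⟨?_, ?_, htri'⟩
  · intro a ha b hb
    refine ⟨hmul a ha.1 b hb.1, fun hab => ?_⟩
    exact ha.2 (hconv 1 C.one_mem (a * b) hab a (by simpa using ha.1)
      (by simpa using hb.1))
  · intro c hc q hq c' hc'
    exact hQC _ (hCQ c hc q hq) c' hc'
end

section
/- Suppose 1 → K → G → H → 1 is a short exact sequence of groups with quotient map q : G → H, Q is a positive cone of H, and P is a positive cone of K (viewed in G) satisfying gPg⁻¹ = P for all g ∈ G. Then q⁻¹(Q) ∪ P is a positive cone of G. -/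
theorem stmt_15 {G H : Type*} [Group G] [Group H]
    (q : G →* H) (hq : Function.Surjective q)
    (Q : Set H) (hQ : IsCone Q)
    (P : Set G) (hP : IsConeOn q.ker P)
    (hinv : ∀ g : G, (fun p => g * p * g⁻¹) '' P = P) :
    IsCone (q ⁻¹' Q ∪ P) := by
  obtain ⟨hQmul, hQtri, hQasym, hQone⟩ := hQ
  obtain ⟨hPsub, hPmul, hPtri, hPasym, hPone⟩ := hP
  have hker : ∀ p ∈ P, q p = 1 := fun p hp => hPsub hp
  refine ⟨?_, ?_, ?_, ?_⟩
  · rintro a (ha | ha) b (hb | hb)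
    · exact Or.inl (by simpa using hQmul _ ha _ hb)
    · left
      simp only [Set.mem_preimage, map_mul, hker b hb, mul_one]
      exact ha
    · left
      simp only [Set.mem_preimage, map_mul, hker a ha, one_mul]
      exact hb
    · exact Or.inr (hPmul _ ha _ hb)
  · intro g
    rcases hQtri (q g) with h | h | h
    · exact Or.inl (Or.inl h)
    · exact Or.inr (Or.inl (Or.inl (by simpa using h)))
    · rcases hPtri g h with h' | h' | h'
      · exact Or.inl (Or.inr h')
      · exact Or.inr (Or.inl (Or.inr h'))
      · exact Or.inr (Or.inr h')
  · rintro g (hg | hg) (hg' | hg')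
    · exact hQasym _ hg (by simpa using hg')
    · have : q g = 1 := by
        have := hker _ hg'
        simp at this
        simpa using this
      rw [Set.mem_preimage, this] at hg
      exact hQone hg
    · have : q g⁻¹ = 1 := by simp [hker _ hg]
      rw [Set.mem_preimage, this] at hg'
      exact hQone hg'
    · exact hPasym _ hg hg'
  · rintro (h | h)
    · exact hQone (by simpa using h)
    · exact hPone h
end

section
/- Suppose 1 → K → G →^q H → 1 is a short exact sequence, P is a positive cone of K = ker q satisfying gPg⁻¹ = P for all g ∈ G, and Q, R are positive cones of H. If g ∈ G and g·(q⁻¹(R) ∪ P)·g⁻¹ = q⁻¹(Q) ∪ P, then q(g)·R·q(g)⁻¹ = Q. Conversely, if h ∈ H satisfies hRh⁻¹ = Q and g ∈ G satisfies q(g) = h, then g·(q⁻¹(R) ∪ P)·g⁻¹ = q⁻¹(Q) ∪ P. -/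
theorem stmt_16 {G H : Type*} [Group G] [Group H]
    (q : G →* H) (hq : Function.Surjective q)
    (P : Set G) (hP : IsConeOn q.ker P)
    (hinv : ∀ g : G, (fun p => g * p * g⁻¹) '' P = P)
    (Q R : Set H) (hQ : IsCone Q) (hR : IsCone R) :
    (∀ g : G,
      (fun w => g * w * g⁻¹) '' (q ⁻¹' R ∪ P) = q ⁻¹' Q ∪ P →
      (fun h => q g * h * (q g)⁻¹) '' R = Q) ∧
    (∀ h : H, (fun x => h * x * h⁻¹) '' R = Q →
      ∀ g : G, q g = h →
        (fun w => g * w * g⁻¹) '' (q ⁻¹' R ∪ P) = q ⁻¹' Q ∪ P) := by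

  obtain ⟨hPker, -⟩ := hP
  constructor
  · intro g hg
    ext a
    constructor
    · rintro ⟨r, hr, rfl⟩
      obtain ⟨x, rfl⟩ := hq r
      have hx : g * x * g⁻¹ ∈ q ⁻¹' Q ∪ P := by
        rw [← hg]; exact ⟨x, Or.inl hr, rfl⟩
      rcases hx with hx | hx
      · simpa [map_mul] using hx
      · exfalso
        have h1 : q (g * x * g⁻¹) = 1 := hPker hx
        have hx1 : q x = 1 := by
          have := congrArg (fun z => (q g)⁻¹ * z * q g) h1
          simpa [map_mul, mul_assoc] using this
        exact hR.2.2.2 (hx1 ▸ hr)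
    · intro ha
      obtain ⟨y, rfl⟩ := hq a
      have hy : y ∈ (fun w => g * w * g⁻¹) '' (q ⁻¹' R ∪ P) := by
        rw [hg]; exact Or.inl ha
      obtain ⟨w, hw | hw, rfl⟩ := hy
      · exact ⟨q w, hw, by simp [map_mul]⟩
      · exfalso
        have h1 : q w = 1 := hPker hw
        have : q (g * w * g⁻¹) = 1 := by simp [map_mul, h1]
        exact hQ.2.2.2 (this ▸ ha)
  · intro h hh g hgq
    ext y
    constructor
    · rintro ⟨w, hw | hw, rfl⟩
      · left
        show q (g * w * g⁻¹) ∈ Q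
        rw [← hh]
        exact ⟨q w, hw, by simp [map_mul, hgq]⟩
      · right
        rw [← hinv g]
        exact ⟨w, hw, rfl⟩
    · rintro (hy | hy)
      · have : q y ∈ (fun x => h * x * h⁻¹) '' R := hh ▸ hy
        obtain ⟨r, hr, hre⟩ := this
        refine ⟨g⁻¹ * y * g, Or.inl ?_, by group⟩
        show q (g⁻¹ * y * g) ∈ R
        have : q (g⁻¹ * y * g) = r := by
          simp only [map_mul, map_inv, hgq]
          rw [← hre]; group
        rwa [this]
      · have : g⁻¹ * y * (g⁻¹)⁻¹ ∈ P := by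
          rw [← hinv g⁻¹]; exact ⟨y, hy, rfl⟩
        simp only [inv_inv] at this
        exact ⟨g⁻¹ * y * g, Or.inr this, by group⟩
end

section
/- Let C be a group with a bi-invariant positive cone P, let F be a group with a left-invariant strict total order ≺, and let B = ⊕_{x∈F} C be the finitely supported functions from F to C. For A ⊆ F, define R_A = {f ∈ B : f ≠ 1 and f(x_0) ∈ P_{x_0}}, where x_0 is the ≺-minimum of the support of f and P_x = P if x ∈ A, P_x = P⁻¹ otherwise. Then for every h ∈ F, the action of h on B by (h·f)(x) = f(h⁻¹x) satisfies h·R_A = R_{hA}, where hA = {ha : a ∈ A}. -/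
/-- The positive cone `R_A` on `B = ⊕_{x ∈ F} C` (finitely supported functions
`F → C`) associated to `A ⊆ F`: `f` is positive iff its value at the
`≺`-minimum `x₀` of its support lies in `P` when `x₀ ∈ A`, and in `P⁻¹`
otherwise. -/
def coneRA {F C : Type*} [Group F] [Group C] (lt : F → F → Prop)
    (P : Set C) (A : Set F) : Set (F → C) :=
  {f | (Function.mulSupport f).Finite ∧
    ∃ x₀ : F, (∀ y : F, lt y x₀ → f y = 1) ∧ f x₀ ≠ 1 ∧
      ((x₀ ∈ A ∧ f x₀ ∈ P) ∨ (x₀ ∉ A ∧ (f x₀)⁻¹ ∈ P))}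

lemma coneRA_translate {F C : Type*} [Group F] [Group C] (lt : F → F → Prop)
    (hleft : ∀ a x y : F, lt x y → lt (a * x) (a * y))
    (P : Set C) (A : Set F) (h : F) (f : F → C) (hf : f ∈ coneRA lt P A) :
    (fun x => f (h⁻¹ * x)) ∈ coneRA lt P ((fun a => h * a) '' A) := by
  obtain ⟨hfin, x₀, hmin, hne, hcase⟩ := hf
  refine ⟨?_, h * x₀, ?_, ?_, ?_⟩
  · have : (Function.mulSupport fun x => f (h⁻¹ * x)) ⊆
        (fun x => h * x) '' Function.mulSupport f := by
      intro x hx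
      exact ⟨h⁻¹ * x, hx, by group⟩
    exact (hfin.image _).subset this
  · intro y hy
    have := hleft h⁻¹ y (h * x₀) hy
    rw [show h⁻¹ * (h * x₀) = x₀ by group] at this
    exact hmin _ this
  · simpa using hne
  · have hx0 : h⁻¹ * (h * x₀) = x₀ := by group
    rcases hcase with ⟨hA, hP⟩ | ⟨hA, hP⟩
    · exact Or.inl ⟨⟨x₀, hA, rfl⟩, by simpa [hx0] using hP⟩
    · refine Or.inr ⟨?_, by simpa [hx0] using hP⟩
      rintro ⟨a, ha, hae⟩
      exact hA (by rwa [show a = x₀ from mul_left_cancel hae] at ha)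

theorem stmt_18 {F C : Type*} [Group F] [Group C]
    (lt : F → F → Prop)
    (hirr : ∀ x : F, ¬ lt x x)
    (htrans : ∀ x y z : F, lt x y → lt y z → lt x z)
    (htotal : ∀ x y : F, x ≠ y → lt x y ∨ lt y x)
    (hleft : ∀ a x y : F, lt x y → lt (a * x) (a * y))
    (P : Set C)
    (hmul : ∀ a ∈ P, ∀ b ∈ P, a * b ∈ P)
    (hcover : ∀ c : C, c ∈ P ∨ c⁻¹ ∈ P ∨ c = 1)
    (hdisj : ∀ c ∈ P, c⁻¹ ∉ P)
    (hone : (1 : C) ∉ P)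
    (hbi : ∀ c : C, ∀ p ∈ P, c * p * c⁻¹ ∈ P)
    (A : Set F) (h : F) :
    (fun f : F → C => fun x => f (h⁻¹ * x)) '' coneRA lt P A =
      coneRA lt P ((fun a => h * a) '' A) := by
  ext g
  constructor
  · rintro ⟨f, hf, rfl⟩
    exact coneRA_translate lt hleft P A h f hf
  · intro hg
    refine ⟨fun x => g (h * x), ?_, ?_⟩
    · have := coneRA_translate lt hleft P ((fun a => h * a) '' A) h⁻¹ g hg
      have himg : (fun a => h⁻¹ * a) '' ((fun a => h * a) '' A) = A := by
        ext a; constructor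
        · rintro ⟨b, ⟨c, hc, rfl⟩, rfl⟩; simpa [← mul_assoc] using hc
        · intro ha; exact ⟨h * a, ⟨a, ha, rfl⟩, by group⟩
      rw [himg] at this; simpa using this
    · funext x; simp [← mul_assoc]
end
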